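/- (Asymptotics of the inner-contour integral with a double pole at 1.) Let 0 < r₀ < r < 1 < R₀ and let h : ℂ → ℂ be complex differentiable on the annulus {z : r₀ < |z| < R₀}. Then ∮_{|z|=r} z^{−m} h(z)/(z − 1)² dz − 2πi·( m·h(1) − h′(1) ) tends to 0 as m → ∞ (m ∈ ℕ), where h′(1) is the complex derivative of h at 1. -/

import Mathlib

open Complex Metric Set Filter

set_option maxHeartbeats 1000000 in
theorem stmt10 (r₀ r R₀ : ℝ) (h0 : 0 < r₀) (h1 : r₀ < r) (h2 : r < 1) (h3 : 1 < R₀)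
    (h : ℂ → ℂ)
    (hh : DifferentiableOn ℂ h {z : ℂ | r₀ < ‖z‖ ∧ ‖z‖ < R₀}) :
    Filter.Tendsto
      (fun m : ℕ =>
        (∮ z in C(0, r), z ^ (-(m : ℤ)) * h z / (z - 1) ^ 2) -
          2 * Real.pi * Complex.I * ((m : ℂ) * h 1 - deriv h 1))
      Filter.atTop (nhds 0) := by
  set A : Set ℂ := {z : ℂ | r₀ < ‖z‖ ∧ ‖z‖ < R₀} with hA_def
  have hAopen : IsOpen A := by
    have : A = (fun z : ℂ => ‖z‖) ⁻¹' Set.Ioo r₀ R₀ := rfl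
    rw [this]; exact isOpen_Ioo.preimage continuous_norm
  set R : ℝ := (1 + R₀) / 2 with hR_def
  have hR1 : 1 < R := by simp only [hR_def]; linarith
  have hRR0 : R < R₀ := by simp only [hR_def]; linarith
  have hrpos : 0 < r := h0.trans h1
  have hrR : r ≤ R := by linarith
  have h1A : (1 : ℂ) ∈ A := by
    constructor <;> simp only [norm_one]
    · linarith
    · exact h3
  have hA0 : ∀ z ∈ A, z ≠ 0 := by
    intro z hz hz0
    rw [hz0] at hz
    simp only [hA_def, mem_setOf_eq, norm_zero] at hz
    linarith [hz.1]
  have hannsub : closedBall (0:ℂ) R \ ball (0:ℂ) r ⊆ A := by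
    intro z hz
    rw [mem_diff, mem_closedBall, mem_ball, Complex.dist_eq, sub_zero, not_lt] at hz
    exact ⟨lt_of_lt_of_le h1 hz.2, lt_of_le_of_lt hz.1 hRR0⟩
  have hsphr : ∀ z ∈ sphere (0:ℂ) r, ‖z‖ = r := by
    intro z hz; rwa [mem_sphere, Complex.dist_eq, sub_zero] at hz
  have hsphR : ∀ z ∈ sphere (0:ℂ) R, ‖z‖ = R := by
    intro z hz; rwa [mem_sphere, Complex.dist_eq, sub_zero] at hz
  have hsub_r : sphere (0:ℂ) r ⊆ A := by
    intro z hz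
    exact ⟨by rw [hsphr z hz]; linarith, by rw [hsphr z hz]; linarith⟩
  have hsub_R : sphere (0:ℂ) R ⊆ A := by
    intro z hz
    exact ⟨by rw [hsphR z hz]; linarith, by rw [hsphR z hz]; linarith⟩
  have hne_r : ∀ z ∈ sphere (0:ℂ) r, z ≠ 1 := by
    intro z hz hz1
    rw [hz1] at hz; have := hsphr 1 hz; simp at this; linarith
  have hne_R : ∀ z ∈ sphere (0:ℂ) R, z ≠ 1 := by
    intro z hz hz1
    rw [hz1] at hz; have := hsphR 1 hz; simp at this; linarith
  -- key identity
  have key : ∀ m : ℕ,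
      (∮ z in C(0, r), z ^ (-(m : ℤ)) * h z / (z - 1) ^ 2) -
        2 * Real.pi * Complex.I * ((m : ℂ) * h 1 - deriv h 1)
      = ∮ z in C(0, R), z ^ (-(m : ℤ)) * h z / (z - 1) ^ 2 := by
    intro m
    set q : ℂ → ℂ := fun z => z ^ (-(m : ℤ)) * h z with hq_def
    have hq : DifferentiableOn ℂ q A := by
      intro z hz
      exact (((differentiableAt_zpow).mpr (Or.inl (hA0 z hz))).differentiableWithinAt).mul (hh z hz)
    have hqat : ∀ z ∈ A, DifferentiableAt ℂ q z := fun z hz =>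
      (hq.differentiableAt (hAopen.mem_nhds hz))
    have hq1 : q 1 = h 1 := by simp [hq_def]
    have hderivq : deriv q 1 = -(m : ℂ) * h 1 + deriv h 1 := by
      have hd1 : DifferentiableAt ℂ (fun z : ℂ => z ^ (-(m : ℤ))) 1 :=
        (differentiableAt_zpow).mpr (Or.inl one_ne_zero)
      have hd2 : DifferentiableAt ℂ h 1 := hh.differentiableAt (hAopen.mem_nhds h1A)
      rw [hq_def]
      rw [deriv_fun_mul hd1 hd2, deriv_zpow]
      simp
    set F : ℂ → ℂ := dslope q 1 with hF_def
    set g : ℂ → ℂ := dslope F 1 with hg_def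
    obtain ⟨p, hp⟩ := hq.analyticAt (hAopen.mem_nhds h1A)
    have hgan : AnalyticAt ℂ g 1 :=
      ⟨_, hp.has_fpower_series_dslope_fslope.has_fpower_series_dslope_fslope⟩
    have hgat : ∀ z ∈ A, DifferentiableAt ℂ g z := by
      intro z hz
      rcases eq_or_ne z 1 with rfl | hne
      · exact hgan.differentiableAt
      · exact (differentiableAt_dslope_of_ne hne).2
          ((differentiableAt_dslope_of_ne hne).2 (hqat z hz))
    -- g equals f minus correction terms away from 1
    have hgeq : ∀ z : ℂ, z ≠ 1 →
        g z = z ^ (-(m : ℤ)) * h z / (z - 1) ^ 2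
          - (deriv q 1) * (z - 1)⁻¹ - (q 1) * ((z - 1) ^ (-2 : ℤ)) := by
      intro z hne
      have hz1 : z - 1 ≠ 0 := sub_ne_zero.2 hne
      have hzq : z ^ (-(m : ℤ)) * h z = q z := rfl
      have h2 : (z - 1) ^ (-2 : ℤ) = ((z - 1) ^ 2)⁻¹ := by
        rw [zpow_neg]; norm_cast
      rw [hg_def, dslope_of_ne _ hne, hF_def, slope_def_field, dslope_of_ne _ hne,
        slope_def_field, dslope_same, hzq, h2]
      generalize deriv q 1 = c₀
      generalize q z = a
      generalize q 1 = b
      field_simp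
      ring
    -- equality of the two circle integrals of g
    have hgann : (∮ z in C(0, R), g z) = ∮ z in C(0, r), g z := by
      refine Complex.circleIntegral_eq_of_differentiable_on_annulus_off_countable hrpos hrR
        countable_empty (fun z hz => (hgat z (hannsub hz)).continuousAt.continuousWithinAt)
        (fun z hz => hgat z (hannsub ?_))
      exact ⟨ball_subset_closedBall hz.1.1, fun hzz => hz.1.2 (ball_subset_closedBall hzz)⟩
    -- continuity of the main integrand on spheres
    have hcf : ∀ s : ℝ, sphere (0:ℂ) s ⊆ A → (∀ z ∈ sphere (0:ℂ) s, z ≠ 1) →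
        ContinuousOn (fun z : ℂ => z ^ (-(m : ℤ)) * h z / (z - 1) ^ 2) (sphere (0:ℂ) s) := by
      intro s hs hne
      apply ContinuousOn.div
      · exact (continuousOn_id.zpow₀ _ (fun z hz => Or.inl (hA0 z (hs hz)))).mul
          (hh.continuousOn.mono hs)
      · exact (continuousOn_id.sub continuousOn_const).pow 2
      · intro z hz; exact pow_ne_zero 2 (sub_ne_zero.2 (hne z hz))
    have hcinv : ∀ s : ℝ, (∀ z ∈ sphere (0:ℂ) s, z ≠ 1) →
        ContinuousOn (fun z : ℂ => deriv q 1 * (z - 1)⁻¹) (sphere (0:ℂ) s) := by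
      intro s hne
      exact continuousOn_const.mul ((continuousOn_id.sub continuousOn_const).inv₀
        (fun z hz => sub_ne_zero.2 (hne z hz)))
    have hczpow : ∀ s : ℝ, (∀ z ∈ sphere (0:ℂ) s, z ≠ 1) →
        ContinuousOn (fun z : ℂ => q 1 * (z - 1) ^ (-2 : ℤ)) (sphere (0:ℂ) s) := by
      intro s hne
      exact continuousOn_const.mul ((continuousOn_id.sub continuousOn_const).zpow₀ _
        (fun z hz => Or.inl (sub_ne_zero.2 (hne z hz))))
    -- decompose each circle integral of g
    have edec : ∀ s : ℝ, 0 < s → sphere (0:ℂ) s ⊆ A → (∀ z ∈ sphere (0:ℂ) s, z ≠ 1) →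
        (∮ z in C(0, s), g z)
          = (∮ z in C(0, s), z ^ (-(m : ℤ)) * h z / (z - 1) ^ 2)
            - deriv q 1 * (∮ z in C(0, s), (z - 1)⁻¹)
            - q 1 * (∮ z in C(0, s), (z - 1) ^ (-2 : ℤ)) := by
      intro s hspos hs hne
      have hEq : Set.EqOn g (fun z : ℂ => z ^ (-(m : ℤ)) * h z / (z - 1) ^ 2
          - deriv q 1 * (z - 1)⁻¹ - q 1 * ((z - 1) ^ (-2 : ℤ))) (sphere (0:ℂ) s) :=
        fun z hz => hgeq z (hne z hz)
      have i1 : CircleIntegrable (fun z : ℂ => z ^ (-(m : ℤ)) * h z / (z - 1) ^ 2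
          - deriv q 1 * (z - 1)⁻¹) 0 s :=
        ((hcf s hs hne).sub (hcinv s hne)).circleIntegrable hspos.le
      have i2 : CircleIntegrable (fun z : ℂ => q 1 * (z - 1) ^ (-2 : ℤ)) 0 s :=
        (hczpow s hne).circleIntegrable hspos.le
      have i3 : CircleIntegrable (fun z : ℂ => z ^ (-(m : ℤ)) * h z / (z - 1) ^ 2) 0 s :=
        (hcf s hs hne).circleIntegrable hspos.le
      have i4 : CircleIntegrable (fun z : ℂ => deriv q 1 * (z - 1)⁻¹) 0 s :=
        (hcinv s hne).circleIntegrable hspos.le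
      rw [circleIntegral.integral_congr hspos.le hEq,
        circleIntegral.integral_sub i1 i2, circleIntegral.integral_sub i3 i4,
        circleIntegral.integral_const_mul, circleIntegral.integral_const_mul]
    -- values of the correction integrals
    have v2 : ∀ s : ℝ, (∮ z in C(0, s), (z - 1) ^ (-2 : ℤ)) = 0 := fun s =>
      circleIntegral.integral_sub_zpow_of_ne (by decide) 0 1 s
    have v1r : (∮ z in C(0, r), ((z : ℂ) - 1)⁻¹) = 0 := by
      have hball : ∀ z ∈ closedBall (0:ℂ) r, z ≠ 1 := by
        intro z hz hz1
        rw [hz1, mem_closedBall, Complex.dist_eq, sub_zero] at hz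
        simp at hz; linarith
      have hdiff : ∀ z ∈ closedBall (0:ℂ) r, DifferentiableAt ℂ (fun z : ℂ => (z - 1)⁻¹) z :=
        fun z hz => ((differentiableAt_id.sub (differentiableAt_const 1)).inv
          (sub_ne_zero.2 (hball z hz)))
      exact Complex.circleIntegral_eq_zero_of_differentiable_on_off_countable hrpos.le
        countable_empty (fun z hz => (hdiff z hz).continuousAt.continuousWithinAt)
        (fun z hz => hdiff z (ball_subset_closedBall hz.1))
    have v1R : (∮ z in C(0, R), ((z : ℂ) - 1)⁻¹) = 2 * Real.pi * Complex.I := by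
      apply circleIntegral.integral_sub_inv_of_mem_ball
      rw [mem_ball, Complex.dist_eq, sub_zero]
      simp only [norm_one]; linarith
    have er := edec r hrpos hsub_r hne_r
    have eR := edec R (by linarith) hsub_R hne_R
    rw [er, eR, v1r, v1R, v2, v2, hderivq, hq1] at hgann
    linear_combination -hgann
  -- the outer integral tends to zero
  obtain ⟨C, hC⟩ := (isCompact_sphere (0:ℂ) R).exists_bound_of_continuousOn
    (f := fun z : ℂ => h z / (z - 1) ^ 2)
    (ContinuousOn.div (hh.continuousOn.mono hsub_R)
      ((continuousOn_id.sub continuousOn_const).pow 2)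
      (fun z hz => pow_ne_zero 2 (sub_ne_zero.2 (hne_R z hz))))
  set D : ℝ := max C 0 with hD_def
  have hRpos : (0:ℝ) < R := by linarith
  have hb : ∀ m : ℕ, ‖∮ z in C(0, R), z ^ (-(m : ℤ)) * h z / (z - 1) ^ 2‖
      ≤ 2 * Real.pi * R * ((R⁻¹) ^ m * D) := by
    intro m
    apply circleIntegral.norm_integral_le_of_norm_le_const hRpos.le
    intro z hz
    have hzfac : z ^ (-(m : ℤ)) * h z / (z - 1) ^ 2
        = z ^ (-(m : ℤ)) * (h z / (z - 1) ^ 2) := mul_div_assoc _ _ _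
    rw [hzfac, norm_mul, norm_zpow]
    have hnz : ‖z‖ = R := hsphR z hz
    rw [hnz, zpow_neg, zpow_natCast, ← inv_pow]
    exact mul_le_mul_of_nonneg_left ((hC z hz).trans (le_max_left _ _))
      (pow_nonneg (inv_nonneg.2 hRpos.le) m)
  have hlim : Filter.Tendsto (fun m : ℕ => 2 * Real.pi * R * ((R⁻¹) ^ m * D))
      Filter.atTop (nhds 0) := by
    have h' : Filter.Tendsto (fun m : ℕ => (R⁻¹) ^ m) Filter.atTop (nhds 0) :=
      tendsto_pow_atTop_nhds_zero_of_lt_one (inv_nonneg.2 hRpos.le)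
        (inv_lt_one_of_one_lt₀ hR1)
    have := (h'.mul_const D).const_mul (2 * Real.pi * R)
    simpa using this
  simp only [key]
  exact squeeze_zero_norm hb hlim
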